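/- Let 0 < c < 1, c < b, d ≥ 0, and let {ξ_k}_{k≥1} be nonnegative reals with ξ_{k+1} ≤ (1 − c/(k+b)) ξ_k + d/((k+b)(k+b−1)) for all k ≥ 1. Then for every k ≥ 1, ξ_{k+1} ≤ (1/(k+b+1)^c) · ((b+1)^c ξ₁ + d(b+1)(b+3−c)/(b²(b+2)^{1−c}(1−c))). -/

import Mathlib

open Real Finset


lemma step_ineq {c : ℝ} (hc0 : 0 < c) (hc1 : c < 1) {s : ℝ} (hs : 0 < s) (hcs : c ≤ s) :
    (1 - c/s) * (1/s^c) ≤ 1/(s+1)^c := by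
  have hs1 : (0:ℝ) < 1 + 1/s := by positivity
  have h1 : (1 + 1/s)^c ≤ 1 + c * (1/s) :=
    rpow_one_add_le_one_add_mul_self
      (by have h : (0:ℝ) < 1/s := by positivity
          linarith) hc0.le hc1.le
  have hnn : 0 ≤ 1 - c/s := by
    rw [sub_nonneg, div_le_one hs]; exact hcs
  have key : (1 - c/s) * (1 + 1/s)^c ≤ 1 := by
    calc (1 - c/s) * (1 + 1/s)^c ≤ (1 - c/s) * (1 + c * (1/s)) :=
          mul_le_mul_of_nonneg_left h1 hnn
      _ = 1 - (c/s)^2 := by field_simp; ring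
      _ ≤ 1 := by nlinarith [sq_nonneg (c/s)]
  have hsp : (0:ℝ) < s^c := rpow_pos_of_pos hs c
  have hsp1 : (0:ℝ) < (s+1)^c := rpow_pos_of_pos (by linarith) c
  have heq : (s+1)^c = s^c * (1 + 1/s)^c := by
    rw [← Real.mul_rpow hs.le hs1.le]
    congr 1; field_simp
  rw [le_div_iff₀ hsp1, heq]
  have h2 : (0:ℝ) < (1+1/s)^c := rpow_pos_of_pos hs1 c
  calc (1 - c/s) * (1/s^c) * (s^c * (1+1/s)^c)
      = (1 - c/s) * (1+1/s)^c := by field_simp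
    _ ≤ 1 := key

lemma tele_ineq {c : ℝ} (hc0 : 0 < c) (hc1 : c < 1) {s : ℝ} (hs : 1 < s) :
    (1-c) * s^(c-2) ≤ (s-1)^(c-1) - s^(c-1) := by
  have hs0 : (0:ℝ) < s := by linarith
  have hb : (1 + (-(1/s)))^(1-c) ≤ 1 + (1-c) * (-(1/s)) :=
    rpow_one_add_le_one_add_mul_self
      (by have : 1/s < 1 := by rw [div_lt_one hs0]; exact hs
          have : (0:ℝ) < 1/s := by positivity
          linarith) (by linarith) (by linarith)
  have hx1' : (0:ℝ) < 1 + (-(1/s)) := by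
    have : 1/s < 1 := by rw [div_lt_one hs0]; exact hs
    linarith
  have hq : (0:ℝ) < 1 + (1-c)/s := by
    have h0 : (0:ℝ) ≤ (1-c)/s := div_nonneg (by linarith) hs0.le
    linarith
  have hinv : (1 + (1-c)/s) ≤ (1 + (-(1/s)))^(c-1) := by
    have e1 : (1 + (-(1/s)))^(c-1) = ((1 + (-(1/s)))^(1-c))⁻¹ := by
      rw [show c-1 = -(1-c) by ring, Real.rpow_neg hx1'.le]
    have hpw : (0:ℝ) < (1 + (-(1/s)))^(1-c) := rpow_pos_of_pos hx1' _
    rw [e1, ← one_div, le_div_iff₀ hpw]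
    calc (1 + (1-c)/s) * (1 + (-(1/s)))^(1-c)
        ≤ (1 + (1-c)/s) * (1 + (1-c) * (-(1/s))) := mul_le_mul_of_nonneg_left hb hq.le
      _ = 1 - ((1-c)/s)^2 := by field_simp; ring
      _ ≤ 1 := by nlinarith [sq_nonneg ((1-c)/s)]
  have hsplit : (s-1)^(c-1) = s^(c-1) * (1 + (-(1/s)))^(c-1) := by
    rw [← Real.mul_rpow hs0.le hx1'.le]
    congr 1; field_simp; ring
  have hpow : s^(c-1) * (1 + (1-c)/s) = s^(c-1) + (1-c) * s^(c-2) := by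
    have e2 : s^(c-2) = s^(c-1) * s⁻¹ := by
      rw [show c-2 = (c-1) + (-1) by ring, Real.rpow_add hs0, Real.rpow_neg_one]
    rw [e2]; field_simp
  have hsc : (0:ℝ) < s^(c-1) := rpow_pos_of_pos hs0 _
  calc (1-c) * s^(c-2) = s^(c-1) * (1 + (1-c)/s) - s^(c-1) := by rw [hpow]; ring
    _ ≤ s^(c-1) * (1 + (-(1/s)))^(c-1) - s^(c-1) := by
        have := mul_le_mul_of_nonneg_left hinv hsc.le
        linarith
    _ = (s-1)^(c-1) - s^(c-1) := by rw [hsplit]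


section
variable {b c : ℝ}

lemma term_bound (hc0 : 0 < c) (hc1 : c < 1) (hb : 0 < b) {s : ℝ} (hs : 1 + b ≤ s) :
    (s+1)^c/(s*(s-1)) ≤ ((b+1)*(b+2)^c/((b+1)^c*b*(1-c))) * ((s-1)^(c-1) - s^(c-1)) := by
  have hs1 : 1 < s := by linarith
  have hs0 : (0:ℝ) < s := by linarith
  have hb1 : (0:ℝ) < b+1 := by linarith
  have hb2 : (0:ℝ) < b+2 := by linarith
  have hΔ : (1-c) * s^(c-2) ≤ (s-1)^(c-1) - s^(c-1) := tele_ineq hc0 hc1 hs1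
  have hA : (s+1)^c ≤ (b+2)^c/(b+1)^c * s^c := by
    have h1 : s+1 ≤ (b+2)/(b+1) * s := by
      rw [div_mul_eq_mul_div, le_div_iff₀ hb1]; nlinarith
    calc (s+1)^c ≤ ((b+2)/(b+1) * s)^c :=
          rpow_le_rpow (by linarith) h1 hc0.le
      _ = (b+2)^c/(b+1)^c * s^c := by
          rw [Real.mul_rpow (by positivity) hs0.le, Real.div_rpow hb2.le hb1.le]
  have hB : b/(b+1)*s^2 ≤ s*(s-1) := by
    rw [div_mul_eq_mul_div, div_le_iff₀ hb1]; nlinarith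
  have hd1 : (0:ℝ) < b/(b+1)*s^2 := by positivity
  have step1 : (s+1)^c/(s*(s-1)) ≤ ((b+2)^c/(b+1)^c * s^c)/(b/(b+1)*s^2) :=
    div_le_div₀ (by positivity) hA hd1 hB
  have e : ((b+2)^c/(b+1)^c * s^c)/(b/(b+1)*s^2)
      = (b+2)^c*(b+1)/((b+1)^c*b) * s^(c-2) := by
    have e2 : s^(c-2) = s^c * s⁻¹ * s⁻¹ := by
      rw [show c-2 = c + (-1) + (-1) by ring, Real.rpow_add hs0, Real.rpow_add hs0,
        Real.rpow_neg_one]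
    rw [e2]; field_simp
  have step2 : (b+2)^c*(b+1)/((b+1)^c*b) * s^(c-2)
      ≤ (b+2)^c*(b+1)/((b+1)^c*b) * (((s-1)^(c-1) - s^(c-1))/(1-c)) := by
    apply mul_le_mul_of_nonneg_left _ (by positivity)
    rw [le_div_iff₀ (by linarith : (0:ℝ) < 1-c)]
    linarith
  calc (s+1)^c/(s*(s-1)) ≤ ((b+2)^c/(b+1)^c * s^c)/(b/(b+1)*s^2) := step1
    _ = (b+2)^c*(b+1)/((b+1)^c*b) * s^(c-2) := e
    _ ≤ (b+2)^c*(b+1)/((b+1)^c*b) * (((s-1)^(c-1) - s^(c-1))/(1-c)) := step2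
    _ = ((b+1)*(b+2)^c/((b+1)^c*b*(1-c))) * ((s-1)^(c-1) - s^(c-1)) := by
        field_simp

lemma const_bound (hc0 : 0 < c) (hc1 : c < 1) (hb : 0 < b) :
    ((b+1)*(b+2)^c/((b+1)^c*b*(1-c))) * b^(c-1)
      ≤ (b+1)*(b+3-c)/(b^2*(b+2)^(1-c)*(1-c)) := by
  have hb1 : (0:ℝ) < b+1 := by linarith
  have hb2 : (0:ℝ) < b+2 := by linarith
  have h1c : (0:ℝ) < 1-c := by linarith
  have hp1 : (0:ℝ) < (b+1)^c := rpow_pos_of_pos hb1 c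
  have hp2 : (0:ℝ) < (b+2)^c := rpow_pos_of_pos hb2 c
  have hp0 : (0:ℝ) < b^c := rpow_pos_of_pos hb c
  have e1 : (b+2)^(1-c) = (b+2) / (b+2)^c := by
    rw [Real.rpow_sub hb2, Real.rpow_one]
  have e2 : b^(c-1) = b^c / b := by
    rw [Real.rpow_sub hb, Real.rpow_one]
  have core : (b+2)*b^c ≤ (b+3-c)*(b+1)^c :=
    mul_le_mul (by linarith) (rpow_le_rpow hb.le (by linarith) hc0.le) hp0.le (by linarith)
  rw [e1, e2]
  rw [show ((b+1)*(b+2)^c/((b+1)^c*b*(1-c))) * (b^c/b)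
      = ((b+1)*(b+2)^c*b^c) / ((b+1)^c*b^2*(1-c)) by field_simp]
  rw [show (b+1)*(b+3-c)/(b^2*((b+2)/(b+2)^c)*(1-c))
      = ((b+1)*(b+3-c)*(b+2)^c) / (b^2*(b+2)*(1-c)) by
        rw [div_eq_div_iff (by positivity) (by positivity)]
        field_simp]
  rw [div_le_div_iff₀ (by positivity) (by positivity)]
  nlinarith [mul_le_mul_of_nonneg_left core
    (show (0:ℝ) ≤ (b+1)*(b+2)^c*b^2*(1-c) by positivity)]

lemma onestep (hc0 : 0 < c) (hc1 : c < 1) {s x A e : ℝ} (hs : 0 < s) (hcs : c ≤ s)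
    (hs1 : 1 < s) (hA : 0 ≤ A) (he : 0 ≤ e) (hx : x ≤ A / s^c) :
    (1 - c/s)*x + e/(s*(s-1)) ≤ (A + e*((s+1)^c/(s*(s-1)))) / (s+1)^c := by
  have hsc : (0:ℝ) < s^c := rpow_pos_of_pos hs c
  have hsc1 : (0:ℝ) < (s+1)^c := rpow_pos_of_pos (by linarith) c
  have hnn : 0 ≤ 1 - c/s := by
    rw [sub_nonneg, div_le_one hs]; exact hcs
  have h2 : (1 - c/s)*x ≤ A / (s+1)^c := by
    calc (1 - c/s)*x ≤ (1 - c/s)*(A/s^c) := mul_le_mul_of_nonneg_left hx hnn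
      _ = A * ((1 - c/s)*(1/s^c)) := by ring
      _ ≤ A * (1/(s+1)^c) := mul_le_mul_of_nonneg_left (step_ineq hc0 hc1 hs hcs) hA
      _ = A / (s+1)^c := by ring
  have h3 : (e*((s+1)^c/(s*(s-1))))/(s+1)^c = e/(s*(s-1)) * ((s+1)^c/(s+1)^c) := by ring
  rw [div_self hsc1.ne', mul_one] at h3
  rw [add_div]
  exact add_le_add h2 h3.symm.le

end


section
variable {b c : ℝ}

lemma sum_nonneg' (hc0 : 0 < c) (hb : 0 < b) (k : ℕ) :
    0 ≤ ∑ j ∈ Finset.Icc 1 k, ((j:ℝ)+b+1)^c/(((j:ℝ)+b)*((j:ℝ)+b-1)) := by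
  apply Finset.sum_nonneg
  intro j hj
  have hj1 : 1 ≤ j := (Finset.mem_Icc.mp hj).1
  have hj1' : (1:ℝ) ≤ (j:ℝ) := by exact_mod_cast hj1
  apply div_nonneg (rpow_nonneg (by linarith) c)
  nlinarith

lemma sum_bound (hc0 : 0 < c) (hc1 : c < 1) (hb : 0 < b) :
    ∀ k : ℕ, 1 ≤ k →
      (∑ j ∈ Finset.Icc 1 k, ((j:ℝ)+b+1)^c/(((j:ℝ)+b)*((j:ℝ)+b-1)))
        ≤ ((b+1)*(b+2)^c/((b+1)^c*b*(1-c))) * (b^(c-1) - ((k:ℝ)+b)^(c-1)) := by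
  intro k hk
  induction k, hk using Nat.le_induction with
  | base =>
      rw [Finset.Icc_self, Finset.sum_singleton]
      have h := term_bound hc0 hc1 hb (le_refl (1+b))
      push_cast
      calc ((1:ℝ)+b+1)^c/(((1:ℝ)+b)*((1:ℝ)+b-1))
          ≤ ((b+1)*(b+2)^c/((b+1)^c*b*(1-c))) * (((1:ℝ)+b-1)^(c-1) - ((1:ℝ)+b)^(c-1)) := h
        _ = ((b+1)*(b+2)^c/((b+1)^c*b*(1-c))) * (b^(c-1) - ((1:ℝ)+b)^(c-1)) := by
            norm_num
  | succ k hk ih =>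
      rw [Finset.sum_Icc_succ_top (by omega : 1 ≤ k+1)]
      have h := term_bound hc0 hc1 hb (show 1+b ≤ (k:ℝ)+1+b by
        have : (1:ℝ) ≤ (k:ℝ) := by exact_mod_cast hk
        linarith)
      push_cast
      have e1 : ((k:ℝ)+1+b-1) = (k:ℝ)+b := by ring
      rw [e1] at h
      calc (∑ j ∈ Finset.Icc 1 k, ((j:ℝ)+b+1)^c/(((j:ℝ)+b)*((j:ℝ)+b-1)))
            + ((k:ℝ)+1+b+1)^c/(((k:ℝ)+1+b)*((k:ℝ)+1+b-1))
          ≤ ((b+1)*(b+2)^c/((b+1)^c*b*(1-c))) * (b^(c-1) - ((k:ℝ)+b)^(c-1))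
            + ((b+1)*(b+2)^c/((b+1)^c*b*(1-c))) * (((k:ℝ)+b)^(c-1) - ((k:ℝ)+1+b)^(c-1)) := by
            apply add_le_add ih
            rw [e1]
            exact h
        _ = ((b+1)*(b+2)^c/((b+1)^c*b*(1-c))) * (b^(c-1) - ((k:ℝ)+1+b)^(c-1)) := by ring

end

theorem stmt13 (b c d : ℝ) (hc0 : 0 < c) (hc1 : c < 1) (hcb : c < b) (hd : 0 ≤ d)
    (ξ : ℕ → ℝ) (hξ : ∀ k, 1 ≤ k → 0 ≤ ξ k)
    (hrec : ∀ k, 1 ≤ k →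
      ξ (k+1) ≤ (1 - c/((k:ℝ)+b)) * ξ k + d/(((k:ℝ)+b)*((k:ℝ)+b-1))) :
    ∀ k, 1 ≤ k →
      ξ (k+1) ≤ (1/(((k:ℝ)+b+1)^c)) *
        ((b+1)^c * ξ 1 + d*(b+1)*(b+3-c)/(b^2*(b+2)^(1-c)*(1-c))) := by
  have hb : 0 < b := hc0.trans hcb
  set T : ℕ → ℝ := fun k => ∑ j ∈ Finset.Icc 1 k, ((j:ℝ)+b+1)^c/(((j:ℝ)+b)*((j:ℝ)+b-1))
    with hT
  set A : ℝ := (b+1)^c * ξ 1 with hA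
  have hA0 : 0 ≤ A := mul_nonneg (Real.rpow_nonneg (by linarith) c) (hξ 1 le_rfl)
  have main : ∀ k : ℕ, 1 ≤ k → ξ (k+1) ≤ (A + d * T k) / (((k:ℝ)+b+1)^c) := by
    intro k hk
    induction k, hk using Nat.le_induction with
    | base =>
        have h := hrec 1 le_rfl
        push_cast at h ⊢
        have hT1 : T 1 = ((1:ℝ)+b+1)^c/(((1:ℝ)+b)*((1:ℝ)+b-1)) := by
          rw [hT]; simp [Finset.Icc_self]
        have hx : ξ 1 ≤ A / ((1:ℝ)+b)^c := by
          rw [hA, show ((1:ℝ)+b) = b+1 by ring, mul_comm, mul_div_assoc,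
            div_self (ne_of_gt (Real.rpow_pos_of_pos (show (0:ℝ) < b+1 by linarith) c)), mul_one]
        have hone := onestep hc0 hc1 (show (0:ℝ) < 1+b by linarith)
          (by linarith) (by linarith) hA0 hd hx
        rw [hT1]
        exact h.trans hone
    | succ k hk ih =>
        have h := hrec (k+1) (by omega)
        push_cast at h ⊢
        have hk1 : (1:ℝ) ≤ (k:ℝ) := by exact_mod_cast hk
        have hx : ξ (k+1) ≤ (A + d * T k) / ((k:ℝ)+1+b)^c := by
          rw [show (k:ℝ)+1+b = (k:ℝ)+b+1 by ring]; exact ih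
        have hTk : 0 ≤ T k := sum_nonneg' hc0 hb k
        have hone := onestep hc0 hc1 (show (0:ℝ) < (k:ℝ)+1+b by linarith)
          (by linarith) (by linarith)
          (by positivity : 0 ≤ A + d * T k) hd hx
        have hTs : T (k+1) = T k + (((k:ℝ)+1)+b+1)^c/((((k:ℝ)+1)+b)*(((k:ℝ)+1)+b-1)) := by
          simp only [hT]
          rw [Finset.sum_Icc_succ_top (by omega : 1 ≤ k+1)]
          push_cast
          congr 1
        calc ξ (k+1+1) ≤ (1 - c/((k:ℝ)+1+b)) * ξ (k+1) + d/(((k:ℝ)+1+b)*((k:ℝ)+1+b-1)) := h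
          _ ≤ ((A + d * T k) + d*((((k:ℝ)+1+b)+1)^c/(((k:ℝ)+1+b)*((k:ℝ)+1+b-1))))
              / (((k:ℝ)+1+b)+1)^c := hone
          _ = (A + d * T (k+1)) / ((k:ℝ)+1+b+1)^c := by
              rw [hTs]
              congr 1
              ring_nf
  intro k hk
  have h := main k hk
  have hkk : (1:ℝ) ≤ (k:ℝ) := by exact_mod_cast hk
  have hKpos : (0:ℝ) ≤ (b+1)*(b+2)^c/((b+1)^c*b*(1-c)) := by
    have h1 : (0:ℝ) < (b+2)^c := Real.rpow_pos_of_pos (by linarith) c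
    have h2 : (0:ℝ) < (b+1)^c := Real.rpow_pos_of_pos (by linarith) c
    have h3 : (0:ℝ) < 1 - c := by linarith
    positivity
  have hTb : T k ≤ (b+1)*(b+3-c)/(b^2*(b+2)^(1-c)*(1-c)) := by
    calc T k ≤ ((b+1)*(b+2)^c/((b+1)^c*b*(1-c))) * (b^(c-1) - ((k:ℝ)+b)^(c-1)) :=
          sum_bound hc0 hc1 hb k hk
      _ ≤ ((b+1)*(b+2)^c/((b+1)^c*b*(1-c))) * b^(c-1) := by
          apply mul_le_mul_of_nonneg_left _ hKpos
          have : 0 ≤ ((k:ℝ)+b)^(c-1) := Real.rpow_nonneg (by linarith) _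
          linarith
      _ ≤ (b+1)*(b+3-c)/(b^2*(b+2)^(1-c)*(1-c)) := const_bound hc0 hc1 hb
  have hP : (0:ℝ) < ((k:ℝ)+b+1)^c := Real.rpow_pos_of_pos (by linarith) c
  calc ξ (k+1) ≤ (A + d * T k) / (((k:ℝ)+b+1)^c) := h
    _ ≤ (A + d * ((b+1)*(b+3-c)/(b^2*(b+2)^(1-c)*(1-c)))) / (((k:ℝ)+b+1)^c) := by
        have h2 : d * T k ≤ d * ((b+1)*(b+3-c)/(b^2*(b+2)^(1-c)*(1-c))) :=
          mul_le_mul_of_nonneg_left hTb hd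
        exact (div_le_div_iff_of_pos_right hP).mpr (by linarith)
    _ = (1/(((k:ℝ)+b+1)^c)) * ((b+1)^c * ξ 1 + d*(b+1)*(b+3-c)/(b^2*(b+2)^(1-c)*(1-c))) := by
        rw [hA, one_div, inv_mul_eq_div]
        congr 1
        ring
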